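/- Let M be a real N×N matrix all of whose eigenvalues have negative real part, and let S = {x ∈ ℝ^N : xᵀPx = 1} where P is the symmetric positive definite solution of PM + MᵀP = -I. Then the map ψ : ℝ × S → ℝ^N \ {0}, ψ(t,x) = exp(tM)·x, is a bijection. -/

import Mathlib

open Matrix NormedSpace Set

namespace PsiBijAux

variable {N : ℕ}

/-- The quadratic form `u v ↦ u ⬝ᵥ P v` as a continuous bilinear map. -/
noncomputable def Bc (P : Matrix (Fin N) (Fin N) ℝ) :
    (Fin N → ℝ) →L[ℝ] (Fin N → ℝ) →L[ℝ] ℝ :=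
  LinearMap.toContinuousLinearMap
  { toFun := fun u => LinearMap.toContinuousLinearMap
      { toFun := fun v => u ⬝ᵥ P.mulVec v
        map_add' := fun v w => by simp [Matrix.mulVec_add, dotProduct_add]
        map_smul' := fun c v => by simp [Matrix.mulVec_smul, dotProduct_smul] }
    map_add' := fun u u' => by ext v; simp [add_dotProduct]
    map_smul' := fun c u => by ext v; simp [smul_dotProduct] }

@[simp] lemma Bc_apply (P : Matrix (Fin N) (Fin N) ℝ) (u v : Fin N → ℝ) :
    Bc P u v = u ⬝ᵥ P.mulVec v := rfl

/-- The trajectory. -/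
noncomputable def yf (M : Matrix (Fin N) (Fin N) ℝ) (z : Fin N → ℝ) (t : ℝ) : Fin N → ℝ :=
  (exp (t • M)).mulVec z

/-- The Lyapunov function along the trajectory. -/
noncomputable def gf (M P : Matrix (Fin N) (Fin N) ℝ) (z : Fin N → ℝ) (t : ℝ) : ℝ :=
  yf M z t ⬝ᵥ P.mulVec (yf M z t)

lemma exp_smul_mul (M : Matrix (Fin N) (Fin N) ℝ) (s t : ℝ) :
    exp ((s + t) • M) = exp (s • M) * exp (t • M) := by
  rw [add_smul]
  exact Matrix.exp_add_of_commute _ _ (((Commute.refl M).smul_left s).smul_right t)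

lemma exp_smul_mul_neg (M : Matrix (Fin N) (Fin N) ℝ) (t : ℝ) :
    exp ((-t) • M) * exp (t • M) = 1 := by
  rw [← exp_smul_mul]
  simp

@[simp] lemma yf_zero (M : Matrix (Fin N) (Fin N) ℝ) (z : Fin N → ℝ) : yf M z 0 = z := by
  simp [yf]

lemma yf_ne_zero {M : Matrix (Fin N) (Fin N) ℝ} {z : Fin N → ℝ} (hz : z ≠ 0) (t : ℝ) :
    yf M z t ≠ 0 := by
  intro h
  apply hz
  calc z = (exp ((-t) • M) * exp (t • M)).mulVec z := by rw [exp_smul_mul_neg]; simp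
    _ = (exp ((-t) • M)).mulVec (yf M z t) := by rw [← Matrix.mulVec_mulVec]; rfl
    _ = 0 := by rw [h, Matrix.mulVec_zero]

lemma hasDerivAt_yf (M : Matrix (Fin N) (Fin N) ℝ) (z : Fin N → ℝ) (t : ℝ) :
    HasDerivAt (yf M z) (M.mulVec (yf M z t)) t := by
  letI : SeminormedRing (Matrix (Fin N) (Fin N) ℝ) := Matrix.linftyOpSemiNormedRing
  letI : NormedRing (Matrix (Fin N) (Fin N) ℝ) := Matrix.linftyOpNormedRing
  letI : NormedAlgebra ℝ (Matrix (Fin N) (Fin N) ℝ) := Matrix.linftyOpNormedAlgebra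
  have h1 : HasDerivAt (fun u : ℝ => exp (u • M)) (M * exp (t • M)) t :=
    hasDerivAt_exp_smul_const' M t
  let L : Matrix (Fin N) (Fin N) ℝ →ₗ[ℝ] (Fin N → ℝ) :=
    { toFun := fun A => A.mulVec z
      map_add' := fun A B => Matrix.add_mulVec A B z
      map_smul' := fun c A => Matrix.smul_mulVec c A z }
  have h2 := (LinearMap.toContinuousLinearMap L).hasFDerivAt.comp_hasDerivAt t h1
  have h3 : (⇑(LinearMap.toContinuousLinearMap L) ∘ fun u : ℝ => exp (u • M)) = yf M z := by
    funext s; rfl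
  rw [h3] at h2
  have h4 : (LinearMap.toContinuousLinearMap L) (M * exp (t • M)) = M.mulVec (yf M z t) := by
    show (M * exp (t • M)).mulVec z = _
    rw [← Matrix.mulVec_mulVec]; rfl
  exact h2.congr_deriv h4

lemma hasDerivAt_gf {M P : Matrix (Fin N) (Fin N) ℝ}
    (hPsymm : Pᵀ = P) (hLyap : P * M + Mᵀ * P = -1) (z : Fin N → ℝ) (t : ℝ) :
    HasDerivAt (gf M P z) (-(yf M z t ⬝ᵥ yf M z t)) t := by
  have hy := hasDerivAt_yf M z t
  have h1 : HasDerivAt (fun s => Bc P (yf M z s)) (Bc P (M.mulVec (yf M z t))) t :=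
    (Bc P).hasFDerivAt.comp_hasDerivAt t hy
  have h2 := h1.clm_apply hy
  have h3 : (fun s => Bc P (yf M z s) (yf M z s)) = gf M P z := by
    funext s; simp [gf]
  rw [h3] at h2
  refine h2.congr_deriv ?_; symm
  simp only [Bc_apply]
  set u := yf M z t
  have e1 : M.mulVec u ⬝ᵥ P.mulVec u = u ⬝ᵥ (Mᵀ * P).mulVec u := by
    rw [← Matrix.mulVec_mulVec, Matrix.dotProduct_mulVec u Mᵀ, Matrix.vecMul_transpose]
  have e2 : u ⬝ᵥ P.mulVec (M.mulVec u) = u ⬝ᵥ (P * M).mulVec u := by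
    rw [← Matrix.mulVec_mulVec]
  rw [e1, e2, ← dotProduct_add, ← Matrix.add_mulVec]
  have e3 : Mᵀ * P + P * M = -1 := by rw [add_comm]; exact hLyap
  rw [e3]
  simp [Matrix.neg_mulVec]

lemma dot_self_nonneg (u : Fin N → ℝ) : 0 ≤ u ⬝ᵥ u :=
  Finset.sum_nonneg fun i _ => mul_self_nonneg (u i)

lemma dot_self_pos {u : Fin N → ℝ} (hu : u ≠ 0) : 0 < u ⬝ᵥ u := by
  rcases Function.ne_iff.mp hu with ⟨i, hi⟩
  have : 0 < u i * u i := mul_self_pos.mpr hi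
  calc (0:ℝ) < u i * u i := this
    _ ≤ ∑ j, u j * u j :=
      Finset.single_le_sum (f := fun j => u j * u j)
        (fun j _ => mul_self_nonneg (u j)) (Finset.mem_univ i)

lemma quad_le (P : Matrix (Fin N) (Fin N) ℝ) (u : Fin N → ℝ) :
    u ⬝ᵥ P.mulVec u ≤ (∑ i, ∑ j, |P i j|) * (u ⬝ᵥ u) := by
  have habs : ∀ i j : Fin N, u i * (P i j * u j) ≤ |P i j| * (u ⬝ᵥ u) := by
    intro i j
    have hi : u i * u i ≤ u ⬝ᵥ u :=
      Finset.single_le_sum (f := fun k => u k * u k)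
        (fun k _ => mul_self_nonneg (u k)) (Finset.mem_univ i)
    have hj : u j * u j ≤ u ⬝ᵥ u :=
      Finset.single_le_sum (f := fun k => u k * u k)
        (fun k _ => mul_self_nonneg (u k)) (Finset.mem_univ j)
    have h1 : u i * (P i j * u j) ≤ |P i j| * |u i * u j| := by
      calc u i * (P i j * u j) ≤ |u i * (P i j * u j)| := le_abs_self _
        _ = |P i j| * |u i * u j| := by rw [abs_mul, abs_mul, abs_mul]; ring
    have h2 : |u i * u j| ≤ u ⬝ᵥ u := by
      rw [abs_mul]
      nlinarith [abs_nonneg (u i), abs_nonneg (u j), sq_abs (u i), sq_abs (u j),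
        sq_nonneg (|u i| - |u j|)]
    calc u i * (P i j * u j) ≤ |P i j| * |u i * u j| := h1
      _ ≤ |P i j| * (u ⬝ᵥ u) := by
          exact mul_le_mul_of_nonneg_left h2 (abs_nonneg _)
  calc u ⬝ᵥ P.mulVec u = ∑ i, ∑ j, u i * (P i j * u j) := by
        simp [dotProduct, Matrix.mulVec, Finset.mul_sum]
    _ ≤ ∑ i, ∑ j, |P i j| * (u ⬝ᵥ u) :=
        Finset.sum_le_sum fun i _ => Finset.sum_le_sum fun j _ => habs i j
    _ = (∑ i, ∑ j, |P i j|) * (u ⬝ᵥ u) := by rw [Finset.sum_mul]; simp [Finset.sum_mul]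

end PsiBijAux

open PsiBijAux

/-- For `M` with all eigenvalues of negative real part and `P` the symmetric positive
definite solution of `P M + Mᵀ P = -I`, the map `ψ(t,x) = exp(tM)x` is a bijection
from `ℝ × S` onto `ℝ^N \ {0}`, where `S = {x : xᵀPx = 1}` is the Lyapunov unit sphere. -/
theorem psi_bijective {N : ℕ} (M P : Matrix (Fin N) (Fin N) ℝ)
    (hM : ∀ μ ∈ spectrum ℂ (M.map (Complex.ofReal ·)), μ.re < 0)
    (hPsymm : Pᵀ = P)
    (hPpos : ∀ x : Fin N → ℝ, x ≠ 0 → 0 < x ⬝ᵥ P.mulVec x)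
    (hLyap : P * M + Mᵀ * P = -1) :
    Set.BijOn (fun p : ℝ × (Fin N → ℝ) => (exp (p.1 • M)).mulVec p.2)
      (Set.univ ×ˢ {x : Fin N → ℝ | x ⬝ᵥ P.mulVec x = 1})
      {z : Fin N → ℝ | z ≠ 0} := by
  -- basic facts about `gf`
  set Cc : ℝ := (∑ i, ∑ j, |P i j|) + 1 with hCc
  have hCpos : 0 < Cc := by
    have : (0:ℝ) ≤ ∑ i, ∑ j, |P i j| :=
      Finset.sum_nonneg fun i _ => Finset.sum_nonneg fun j _ => abs_nonneg _
    linarith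
  have hquad : ∀ u : Fin N → ℝ, u ⬝ᵥ P.mulVec u ≤ Cc * (u ⬝ᵥ u) := by
    intro u
    calc u ⬝ᵥ P.mulVec u ≤ (∑ i, ∑ j, |P i j|) * (u ⬝ᵥ u) := quad_le P u
      _ ≤ Cc * (u ⬝ᵥ u) := by
          apply mul_le_mul_of_nonneg_right _ (dot_self_nonneg u)
          linarith
  -- strict monotonicity of `gf` for z ≠ 0
  have hanti : ∀ z : Fin N → ℝ, z ≠ 0 → StrictAnti (gf M P z) := by
    intro z hz
    apply strictAnti_of_deriv_neg
    intro t
    rw [(hasDerivAt_gf hPsymm hLyap z t).deriv]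
    simpa using dot_self_pos (yf_ne_zero hz t)
  -- Gronwall-type bounds via antitonicity of t ↦ exp(t/Cc) * gf t
  have hgron : ∀ z : Fin N → ℝ, Antitone (fun t => Real.exp (t / Cc) * gf M P z t) := by
    intro z
    have hd : ∀ t : ℝ, HasDerivAt (fun t => Real.exp (t / Cc) * gf M P z t)
        (Real.exp (t / Cc) * (1 / Cc) * gf M P z t +
          Real.exp (t / Cc) * -(yf M z t ⬝ᵥ yf M z t)) t := by
      intro t
      have he : HasDerivAt (fun t : ℝ => Real.exp (t / Cc)) (Real.exp (t / Cc) * (1 / Cc)) t := by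
        have := (Real.hasDerivAt_exp (t / Cc)).comp t ((hasDerivAt_id t).div_const Cc)
        simpa [Function.comp_def] using this
      exact he.mul (hasDerivAt_gf hPsymm hLyap z t)
    apply antitone_of_deriv_nonpos
    · exact fun t => (hd t).differentiableAt
    · intro t
      rw [(hd t).deriv]
      have h1 : gf M P z t ≤ Cc * (yf M z t ⬝ᵥ yf M z t) := hquad _
      have h2 : (0:ℝ) < Real.exp (t / Cc) := Real.exp_pos _
      have h4 : (1 / Cc) * gf M P z t ≤ yf M z t ⬝ᵥ yf M z t := by
        rw [one_div, inv_mul_le_iff₀ hCpos]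
        exact h1
      nlinarith [mul_le_mul_of_nonneg_left h4 h2.le]
  -- upper and lower bounds on gf
  have hub : ∀ (z : Fin N → ℝ) (t : ℝ), 0 ≤ t →
      gf M P z t ≤ gf M P z 0 * Real.exp (-(t / Cc)) := by
    intro z t ht
    have h5 : Real.exp (t / Cc) * gf M P z t ≤ gf M P z 0 := by
      simpa using hgron z ht
    have hep : 0 < Real.exp (t / Cc) := Real.exp_pos _
    rw [Real.exp_neg, mul_comm (gf M P z 0), inv_mul_eq_div, le_div_iff₀ hep]
    linarith
  have hlb : ∀ (z : Fin N → ℝ) (t : ℝ), t ≤ 0 →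
      gf M P z 0 * Real.exp (-(t / Cc)) ≤ gf M P z t := by
    intro z t ht
    have h5 : gf M P z 0 ≤ Real.exp (t / Cc) * gf M P z t := by
      simpa using hgron z ht
    have hep : 0 < Real.exp (t / Cc) := Real.exp_pos _
    rw [Real.exp_neg, mul_comm (gf M P z 0), inv_mul_eq_div, div_le_iff₀ hep]
    linarith
  constructor
  · -- MapsTo
    rintro ⟨t, x⟩ ⟨-, hx⟩
    have hx0 : x ≠ 0 := by
      rintro rfl
      simp at hx
    exact yf_ne_zero hx0 t
  constructor
  · -- InjOn
    rintro ⟨t₁, x₁⟩ ⟨h1, hx₁⟩ ⟨t₂, x₂⟩ ⟨h2, hx₂⟩ heq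
    simp only [Set.mem_setOf_eq] at hx₁ hx₂
    have hx₁0 : x₁ ≠ 0 := by rintro rfl; simp at hx₁
    have key : yf M x₁ (t₁ - t₂) = x₂ := by
      have e1 : exp ((t₁ - t₂) • M) = exp ((-t₂) • M) * exp (t₁ • M) := by
        rw [← exp_smul_mul, neg_add_eq_sub]
      have e2 : yf M x₁ (t₁ - t₂) = (exp ((-t₂) • M)).mulVec ((exp (t₁ • M)).mulVec x₁) := by
        rw [yf, e1, ← Matrix.mulVec_mulVec]
      have heq' : (exp (t₁ • M)).mulVec x₁ = (exp (t₂ • M)).mulVec x₂ := heq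
      rw [e2, heq', Matrix.mulVec_mulVec, exp_smul_mul_neg, Matrix.one_mulVec]
    have hg1 : gf M P x₁ (t₁ - t₂) = 1 := by rw [gf, key]; exact hx₂
    have hg0 : gf M P x₁ 0 = 1 := by simpa [gf] using hx₁
    have hteq : t₁ - t₂ = 0 := (hanti x₁ hx₁0).injective (hg1.trans hg0.symm)
    have ht : t₁ = t₂ := by linarith [sub_eq_zero.mp hteq]
    have hx : x₁ = x₂ := by
      have h := key
      rw [hteq, yf_zero] at h
      exact h
    simp [ht, hx]
  · -- SurjOn
    rintro z hz
    have hz0 : z ≠ 0 := hz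
    have hg0pos : 0 < gf M P z 0 := by
      have : gf M P z 0 = z ⬝ᵥ P.mulVec z := by rw [gf, yf_zero]
      rw [this]; exact hPpos z hz0
    set g0 : ℝ := gf M P z 0 with hg0def
    set b : ℝ := Cc * |Real.log g0| with hbdef
    have hb0 : 0 ≤ b := mul_nonneg hCpos.le (abs_nonneg _)
    have hab : -b ≤ b := by linarith
    have hCne : Cc ≠ 0 := hCpos.ne'
    have hginv : Real.exp (-Real.log g0) = g0⁻¹ := by
      rw [Real.exp_neg, Real.exp_log hg0pos]
    -- value at b is ≤ 1
    have hvb : gf M P z b ≤ 1 := by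
      have h1 := hub z b hb0
      have e1 : -(b / Cc) = -|Real.log g0| := by
        rw [hbdef]; field_simp
      rw [e1] at h1
      have h2 : Real.exp (-|Real.log g0|) ≤ g0⁻¹ := by
        rw [← hginv]
        exact Real.exp_le_exp.mpr (neg_le_neg (le_abs_self _))
      calc gf M P z b ≤ g0 * Real.exp (-|Real.log g0|) := h1
        _ ≤ g0 * g0⁻¹ := mul_le_mul_of_nonneg_left h2 hg0pos.le
        _ = 1 := mul_inv_cancel₀ hg0pos.ne'
    -- value at -b is ≥ 1
    have hva : 1 ≤ gf M P z (-b) := by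
      have h1 := hlb z (-b) (by linarith)
      have e1 : -(-b / Cc) = |Real.log g0| := by
        rw [hbdef]; field_simp
      rw [e1] at h1
      have h2 : g0⁻¹ ≤ Real.exp |Real.log g0| := by
        rw [← hginv]
        exact Real.exp_le_exp.mpr (neg_le_abs _)
      calc (1:ℝ) = g0 * g0⁻¹ := (mul_inv_cancel₀ hg0pos.ne').symm
        _ ≤ g0 * Real.exp |Real.log g0| := mul_le_mul_of_nonneg_left h2 hg0pos.le
        _ ≤ gf M P z (-b) := h1
    have hdiff : Differentiable ℝ (gf M P z) := fun t =>
      (hasDerivAt_gf hPsymm hLyap z t).differentiableAt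
    have hmem : (1:ℝ) ∈ Icc (gf M P z b) (gf M P z (-b)) := ⟨hvb, hva⟩
    obtain ⟨t, -, hgt⟩ := intermediate_value_Icc' hab hdiff.continuous.continuousOn hmem
    refine ⟨(-t, yf M z t), ⟨Set.mem_univ _, ?_⟩, ?_⟩
    · exact hgt
    · show (exp ((-t) • M)).mulVec (yf M z t) = z
      rw [yf, Matrix.mulVec_mulVec, exp_smul_mul_neg, Matrix.one_mulVec]
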